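/- Let T = ABC be a triangle of maximum area among all triangles determined by an arrangement of lines, and let ℓ be any line of the arrangement not supporting T. Then either ℓ intersects the interior of T, or ℓ is parallel to one of the three sides of T. -/

import Mathlib

open scoped Classical

/-- A line in the plane given by the equation `a·x + b·y = c` with `(a,b) ≠ (0,0)`. -/
structure Line where
  a : ℝ
  b : ℝ
  c : ℝ
  hab : (a, b) ≠ (0, 0)

namespace Line

/-- The set of points of a line. -/
def pts (L : Line) : Set (ℝ × ℝ) := {p | L.a * p.1 + L.b * p.2 = L.c}

/-- The determinant of the directions of two lines. -/
def lineDet (L M : Line) : ℝ := L.a * M.b - L.b * M.a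

/-- Two lines are parallel (possibly equal) when their directions are proportional. -/
def Parallel (L M : Line) : Prop := lineDet L M = 0

/-- The intersection point of two non-parallel lines. -/
noncomputable def inter (L M : Line) : ℝ × ℝ :=
  ((L.c * M.b - M.c * L.b) / lineDet L M, (L.a * M.c - M.a * L.c) / lineDet L M)

end Line

/-- Standard Euclidean area of the triangle with vertices `p`, `q`, `r`. -/
noncomputable def triangleArea (p q r : ℝ × ℝ) : ℝ :=
  |(q.1 - p.1) * (r.2 - p.2) - (r.1 - p.1) * (q.2 - p.2)| / 2

/-- The area of the triangle determined by three (pairwise non-parallel) lines. -/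
noncomputable def triArea (L M N : Line) : ℝ :=
  triangleArea (Line.inter L M) (Line.inter L N) (Line.inter M N)

/-- Three lines form a (non-degenerate) triangle when they are pairwise
non-parallel and not concurrent. -/
def FormsTriangle (L M N : Line) : Prop :=
  ¬ Line.Parallel L M ∧ ¬ Line.Parallel L N ∧ ¬ Line.Parallel M N ∧
    Line.inter L M ∉ N.pts

/-- The open region bounded by the triangle formed by three lines: the interior
of the convex hull of the three pairwise intersection points. -/
noncomputable def openTriangle (L M N : Line) : Set (ℝ × ℝ) :=
  interior (convexHull ℝ {Line.inter L M, Line.inter L N, Line.inter M N})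

namespace Stmt5Aux
open Line

noncomputable def lval (O : Line) (p : ℝ × ℝ) : ℝ := O.a * p.1 + O.b * p.2 - O.c

def cross3 (p q r : ℝ × ℝ) : ℝ := (q.1 - p.1) * (r.2 - p.2) - (r.1 - p.1) * (q.2 - p.2)

lemma mem_pts_iff {O : Line} {p : ℝ × ℝ} : p ∈ O.pts ↔ lval O p = 0 := by
  simp [Line.pts, lval, sub_eq_zero]

lemma triangleArea_eq (p q r : ℝ × ℝ) : triangleArea p q r = |cross3 p q r| / 2 := rfl

lemma par_symm {L M : Line} (h : ¬ Parallel L M) : ¬ Parallel M L := by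
  simp only [Parallel, lineDet] at h ⊢
  intro hc; apply h; linarith

lemma inter_symm (L M : Line) : inter M L = inter L M := by
  have h1 : M.c * L.b - L.c * M.b = -(L.c * M.b - M.c * L.b) := by ring
  have h2 : M.a * L.c - L.a * M.c = -(L.a * M.c - M.a * L.c) := by ring
  have h3 : lineDet M L = -(lineDet L M) := by simp [lineDet]; ring
  simp only [inter, h1, h2, h3, neg_div_neg_eq]

lemma inter_mem_left {L M : Line} (h : ¬ Parallel L M) : inter L M ∈ L.pts := by
  have hd : lineDet L M ≠ 0 := h
  simp only [Line.pts, inter, Set.mem_setOf_eq]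
  field_simp
  simp only [lineDet]
  ring

lemma inter_mem_right {L M : Line} (h : ¬ Parallel L M) : inter L M ∈ M.pts := by
  have hd : lineDet L M ≠ 0 := h
  simp only [Line.pts, inter, Set.mem_setOf_eq]
  field_simp
  simp only [lineDet]
  ring

lemma inter_unique {L M : Line} (h : ¬ Parallel L M) {p : ℝ × ℝ}
    (hL : p ∈ L.pts) (hM : p ∈ M.pts) : p = inter L M := by
  have hd : lineDet L M ≠ 0 := h
  simp only [Line.pts, Set.mem_setOf_eq] at hL hM
  have h1 : p.1 = (L.c * M.b - M.c * L.b) / lineDet L M := by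
    rw [eq_div_iff hd]; simp only [lineDet]; linear_combination M.b * hL - L.b * hM
  have h2 : p.2 = (L.a * M.c - M.a * L.c) / lineDet L M := by
    rw [eq_div_iff hd]; simp only [lineDet]; linear_combination L.a * hM - M.a * hL
  exact Prod.ext h1 h2

lemma cross3_ne {L M N : Line} (h : FormsTriangle L M N) :
    cross3 (inter L M) (inter L N) (inter M N) ≠ 0 := by
  obtain ⟨h1, h2, h3, h4⟩ := h
  have d1 : lineDet L M ≠ 0 := h1
  have d2 : lineDet L N ≠ 0 := h2
  have d3 : lineDet M N ≠ 0 := h3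
  have hv : lval N (inter L M) ≠ 0 := fun hc => h4 (mem_pts_iff.mpr hc)
  have key : cross3 (inter L M) (inter L N) (inter M N) * (lineDet L M * lineDet L N * lineDet M N)
      = (lval N (inter L M) * lineDet L M) ^ 2 := by
    simp only [cross3, inter, lval, lineDet] at *
    have d3' : N.b * M.a - N.a * M.b ≠ 0 := fun h => d3 (by linarith)
    have d2' : N.b * L.a - L.b * N.a ≠ 0 := fun h => d2 (by linarith)
    field_simp
    ring
  intro hc
  rw [hc, zero_mul] at key
  exact (pow_ne_zero 2 (mul_ne_zero hv d1)) key.symm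


/-- point on segment/line through p,q with parameter s -/
def combo (p q : ℝ × ℝ) (s : ℝ) : ℝ × ℝ := (p.1 + s * (q.1 - p.1), p.2 + s * (q.2 - p.2))

lemma lval_combo (O : Line) (p q : ℝ × ℝ) (s : ℝ) :
    lval O (combo p q s) = lval O p + s * (lval O q - lval O p) := by
  simp only [lval, combo]; ring

lemma combo_mem {L : Line} {p q : ℝ × ℝ} (hp : p ∈ L.pts) (hq : q ∈ L.pts) (s : ℝ) :
    combo p q s ∈ L.pts := by
  rw [mem_pts_iff] at hp hq ⊢
  rw [lval_combo, hp, hq]; ring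

lemma cross3_combo (p q r : ℝ × ℝ) (s t : ℝ) :
    cross3 p (combo p q s) (combo p r t) = s * t * cross3 p q r := by
  simp only [cross3, combo]; ring

lemma par_of_lval_eq {O L : Line} {p q : ℝ × ℝ} (hne : p ≠ q)
    (hp : p ∈ L.pts) (hq : q ∈ L.pts) (hval : lval O p = lval O q) : Parallel O L := by
  simp only [Line.pts, Set.mem_setOf_eq] at hp hq
  have e1 : L.a * (q.1 - p.1) + L.b * (q.2 - p.2) = 0 := by linear_combination hq - hp
  have e2 : O.a * (q.1 - p.1) + O.b * (q.2 - p.2) = 0 := by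
    simp only [lval] at hval; linear_combination hval.symm
  have hd : q.1 - p.1 ≠ 0 ∨ q.2 - p.2 ≠ 0 := by
    by_contra hc
    push_neg at hc
    exact hne (Prod.ext (by linarith [hc.1]) (by linarith [hc.2])).symm
  simp only [Parallel, lineDet]
  rcases hd with hd | hd
  · have : (O.a * L.b - O.b * L.a) * (q.1 - p.1) = 0 := by
      linear_combination L.b * e2 - O.b * e1
    exact (mul_eq_zero.mp this).resolve_right hd
  · have : (O.a * L.b - O.b * L.a) * (q.2 - p.2) = 0 := by
      linear_combination O.a * e1 - L.a * e2
    exact (mul_eq_zero.mp this).resolve_right hd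

/-- The key geometric step: replacing side `C` of the triangle `ABC` by a line `O`
which is "beyond" in the sense of the value conditions yields a strictly larger
triangle `ABO`. -/
lemma key (A B C O : Line) (hT : FormsTriangle A B C)
    (hOA : ¬ Parallel O A) (hOB : ¬ Parallel O B)
    (huv : 0 ≤ lval O (inter A B) * lval O (inter A C))
    (huw : 0 ≤ lval O (inter A B) * lval O (inter B C))
    (hv : (lval O (inter A C)) ^ 2 < (lval O (inter A B)) ^ 2)
    (hw : (lval O (inter B C)) ^ 2 < (lval O (inter A B)) ^ 2)
    (hvw : lval O (inter A C) ≠ lval O (inter B C)) :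
    FormsTriangle A B O ∧ triArea A B C < triArea A B O := by
  obtain ⟨hAB, hAC, hBC, hP⟩ := hT
  set P := inter A B with hPdef
  set Q := inter A C with hQdef
  set R := inter B C with hRdef
  set u := lval O P with hudef
  set v := lval O Q with hvdef
  set w := lval O R with hwdef
  have hu : u ≠ 0 := by intro hc; rw [hc] at hv; nlinarith
  have huv' : u - v ≠ 0 := by
    intro hc; rw [sub_eq_zero] at hc; rw [hc] at hv; exact lt_irrefl _ hv
  have huw' : u - w ≠ 0 := by
    intro hc; rw [sub_eq_zero] at hc; rw [hc] at hw; exact lt_irrefl _ hw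
  set s := u / (u - v) with hsdef
  set t := u / (u - w) with htdef
  -- the new vertices
  have hQ' : combo P Q s = inter A O := by
    apply inter_unique (par_symm hOA)
    · exact combo_mem (inter_mem_left hAB) (inter_mem_left hAC) s
    · rw [mem_pts_iff, lval_combo, ← hudef, ← hvdef, hsdef]
      field_simp
      ring
  have hR' : combo P R t = inter B O := by
    apply inter_unique (par_symm hOB)
    · exact combo_mem (inter_mem_right hAB) (inter_mem_left hBC) t
    · rw [mem_pts_iff, lval_combo, ← hudef, ← hwdef, htdef]
      field_simp
      ring
  have hFT : FormsTriangle A B O := ⟨hAB, par_symm hOA, par_symm hOB,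
    fun hc => hu (mem_pts_iff.mp hc)⟩
  refine ⟨hFT, ?_⟩
  -- positivity of denominators
  have h1 : 0 < (u - v) * u := by nlinarith [sq_nonneg (u - v)]
  have h2 : 0 < (u - w) * u := by nlinarith [sq_nonneg (u - w)]
  have hd : 0 < (u - v) * (u - w) := by
    by_contra hc
    push_neg at hc
    nlinarith [mul_pos h1 h2]
  have hlt : (u - v) * (u - w) < u * u := by
    have hvw' : v - w ≠ 0 := sub_ne_zero.mpr hvw
    have hvw2 : 0 < (v - w) ^ 2 := by positivity
    rcases lt_or_gt_of_ne hu with hneg | hpos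
    · have hv0 : v ≤ 0 := by nlinarith
      have hw0 : w ≤ 0 := by nlinarith
      nlinarith
    · have hv0 : 0 ≤ v := by nlinarith
      have hw0 : 0 ≤ w := by nlinarith
      nlinarith
  have hst : 1 < s * t := by
    rw [hsdef, htdef, div_mul_div_comm]
    rw [lt_div_iff₀ hd]
    linarith
  have harea : triArea A B O = (s * t) * triArea A B C := by
    show triangleArea (inter A B) (inter A O) (inter B O)
        = s * t * triangleArea (inter A B) (inter A C) (inter B C)
    rw [← hQ', ← hR', triangleArea_eq, triangleArea_eq, ← hPdef, ← hQdef, ← hRdef,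
      cross3_combo, abs_mul, abs_of_pos (by linarith : (0:ℝ) < s * t)]
    ring
  have hpos : 0 < triArea A B C := by
    show 0 < triangleArea (inter A B) (inter A C) (inter B C)
    rw [triangleArea_eq]
    have h5 := cross3_ne ⟨hAB, hAC, hBC, hP⟩
    rw [← hPdef, ← hQdef, ← hRdef] at h5
    have h6 : (0:ℝ) < |cross3 P Q R| := abs_pos.mpr h5
    linarith
  rw [harea]
  nlinarith


lemma mem_interior_of_pos (P Q R : ℝ × ℝ) (hnd : cross3 P Q R ≠ 0)
    {α β γ : ℝ} (hα : 0 < α) (hβ : 0 < β) (hγ : 0 < γ) (hsum : α + β + γ = 1) :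
    α • P + β • Q + γ • R ∈ interior (convexHull ℝ {P, Q, R}) := by
  have hind : AffineIndependent ℝ ![P, Q, R] := by
    rw [affineIndependent_iff_not_collinear]
    intro hcol
    obtain ⟨d, hd⟩ := (collinear_iff_of_mem
      (show P ∈ Set.range ![P, Q, R] from ⟨0, rfl⟩)).mp hcol
    obtain ⟨r₁, hr₁⟩ := hd Q ⟨1, rfl⟩
    obtain ⟨r₂, hr₂⟩ := hd R ⟨2, rfl⟩
    apply hnd
    have e1 : Q = r₁ • d + P := hr₁
    have e2 : R = r₂ • d + P := hr₂
    rw [e1, e2]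
    simp only [cross3, Prod.fst_add, Prod.snd_add, Prod.smul_fst, Prod.smul_snd, smul_eq_mul]
    ring
  have htop : affineSpan ℝ (Set.range ![P, Q, R]) = ⊤ := by
    rw [hind.affineSpan_eq_top_iff_card_eq_finrank_add_one]
    simp [Module.finrank_prod]
  let b : AffineBasis (Fin 3) ℝ (ℝ × ℝ) := ⟨![P, Q, R], hind, htop⟩
  have hrange : Set.range (b : Fin 3 → ℝ × ℝ) = {P, Q, R} := by
    show Set.range ![P, Q, R] = _
    ext x
    constructor
    · rintro ⟨n, rfl⟩
      fin_cases n <;> simp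
    · intro hx
      rcases hx with h | h | h
      · exact ⟨0, h.symm⟩
      · exact ⟨1, h.symm⟩
      · exact ⟨2, h.symm⟩
  have hw : (Finset.univ : Finset (Fin 3)).sum ![α, β, γ] = 1 := by
    simp [Fin.sum_univ_three, hsum]
  have hx : α • P + β • Q + γ • R
      = Finset.univ.affineCombination ℝ ![P, Q, R] ![α, β, γ] := by
    rw [Finset.affineCombination_eq_linear_combination _ _ _ hw]
    simp [Fin.sum_univ_three]
  rw [← hrange, AffineBasis.interior_convexHull]
  intro idx
  show 0 < b.coord idx (α • P + β • Q + γ • R)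
  rw [hx]
  have : Finset.univ.affineCombination ℝ ![P, Q, R] ![α, β, γ]
      = Finset.univ.affineCombination ℝ (b : Fin 3 → ℝ × ℝ) ![α, β, γ] := rfl
  rw [this, b.coord_apply_combination_of_mem (Finset.mem_univ idx) hw]
  fin_cases idx <;> simpa


lemma lval_combo3 (O : Line) (P Q R : ℝ × ℝ) {α β γ : ℝ} (hsum : α + β + γ = 1) :
    lval O (α • P + β • Q + γ • R) = α * lval O P + β * lval O Q + γ * lval O R := by
  simp only [lval, Prod.fst_add, Prod.snd_add, Prod.smul_fst, Prod.smul_snd, smul_eq_mul]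
  linear_combination (O.c : ℝ) * hsum

/-- If the line `O` separates `P` strictly from `Q`, it meets the interior of the
triangle `P Q R`. -/
lemma exists_zero_interior (P Q R : ℝ × ℝ) (hnd : cross3 P Q R ≠ 0) (O : Line)
    (hu : 0 < lval O P) (hv : lval O Q < 0) :
    ∃ z ∈ O.pts, z ∈ interior (convexHull ℝ {P, Q, R}) := by
  set u := lval O P with hudef
  set v := lval O Q with hvdef
  set w := lval O R with hwdef
  set ε := min u (-v) with hεdef
  have hε : 0 < ε := lt_min hu (by linarith)
  set γ := ε / (2 * (|w| + ε)) with hγdef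
  have hden : 0 < |w| + ε := by positivity
  have hγ : 0 < γ := by positivity
  have hγ2 : γ ≤ 1 / 2 := by
    rw [hγdef, div_le_div_iff₀ (by positivity) (by norm_num)]
    have : ε ≤ |w| + ε := by nlinarith [abs_nonneg w]
    nlinarith [abs_nonneg w]
  have hγ1 : γ < 1 := by linarith
  set T := -γ * w / (1 - γ) with hTdef
  have h1γ : (0:ℝ) < 1 - γ := by linarith
  have hTbound : |T| < ε := by
    rw [hTdef, abs_div, abs_of_pos h1γ]
    rw [div_lt_iff₀ h1γ]
    have h1 : |(-γ) * w| = γ * |w| := by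
      rw [abs_mul, abs_neg, abs_of_pos hγ]
    rw [h1]
    have h2 : γ * (|w| + ε) = ε / 2 := by
      rw [hγdef]; field_simp
    nlinarith
  have hTu : T < u := lt_of_lt_of_le (lt_of_abs_lt hTbound) (by
    have := min_le_left u (-v); linarith [le_abs_self T])
  have hTv : v < T := by
    have := neg_abs_le T
    have := min_le_right u (-v)
    have := abs_lt.mp hTbound
    linarith
  set a := (T - v) / (u - v) with hadef
  have huv : 0 < u - v := by linarith
  have ha0 : 0 < a := by
    rw [hadef]; apply div_pos (by linarith) huv
  have ha1 : a < 1 := by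
    rw [hadef, div_lt_one huv]; linarith
  set α := (1 - γ) * a with hαdef
  set β := (1 - γ) * (1 - a) with hβdef
  have hα : 0 < α := mul_pos h1γ ha0
  have hβ : 0 < β := mul_pos h1γ (by linarith)
  have hsum : α + β + γ = 1 := by rw [hαdef, hβdef]; ring
  refine ⟨α • P + β • Q + γ • R, ?_, mem_interior_of_pos P Q R hnd hα hβ hγ hsum⟩
  rw [mem_pts_iff, lval_combo3 O P Q R hsum, ← hudef, ← hvdef, ← hwdef]
  have haeq : a * (u - v) = T - v := by rw [hadef]; field_simp
  have hTeq : T * (1 - γ) = -γ * w := by rw [hTdef]; field_simp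
  rw [hαdef, hβdef]
  linear_combination (1 - γ) * haeq + hTeq


lemma cross3_perm1 (p q r : ℝ × ℝ) : cross3 q p r = -cross3 p q r := by
  simp only [cross3]; ring

lemma cross3_perm2 (p q r : ℝ × ℝ) : cross3 p r q = -cross3 p q r := by
  simp only [cross3]; ring

lemma cross3_perm13 (p q r : ℝ × ℝ) : cross3 r q p = -cross3 p q r := by
  simp only [cross3]; ring

lemma cross3_rot (p q r : ℝ × ℝ) : cross3 r p q = cross3 p q r := by
  simp only [cross3]; ring

lemma triangleArea_perm12 (p q r : ℝ × ℝ) : triangleArea q p r = triangleArea p q r := by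
  rw [triangleArea_eq, triangleArea_eq, cross3_perm1, abs_neg]

lemma triangleArea_rot (p q r : ℝ × ℝ) : triangleArea r p q = triangleArea p q r := by
  rw [triangleArea_eq, triangleArea_eq, cross3_rot]

lemma FormsTriangle_swap23 {L M N : Line} (h : FormsTriangle L M N) :
    FormsTriangle L N M := by
  obtain ⟨h1, h2, h3, h4⟩ := h
  refine ⟨h2, h1, par_symm h3, ?_⟩
  intro hc
  have h5 : inter L N = inter L M := inter_unique h1 (inter_mem_left h2) hc
  exact h4 (h5 ▸ inter_mem_right h2)

lemma FormsTriangle_rot {L M N : Line} (h : FormsTriangle L M N) :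
    FormsTriangle M N L := by
  obtain ⟨h1, h2, h3, h4⟩ := h
  refine ⟨h3, par_symm h1, par_symm h2, ?_⟩
  intro hc
  have h5 : inter M N = inter L M := inter_unique h1 hc (inter_mem_left h3)
  exact h4 (h5 ▸ inter_mem_right h3)

lemma triArea_swap23 (L M N : Line) : triArea L N M = triArea L M N := by
  show triangleArea (inter L N) (inter L M) (inter N M) = _
  rw [inter_symm M N]
  exact triangleArea_perm12 _ _ _

lemma triArea_rot (L M N : Line) : triArea M N L = triArea L M N := by
  show triangleArea (inter M N) (inter M L) (inter N L)
      = triangleArea (inter L M) (inter L N) (inter M N)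
  rw [inter_symm L M, inter_symm L N]
  exact triangleArea_rot _ _ _

lemma sq_lt_strict {x y : ℝ} (hne : x ≠ y) (hxy : 0 ≤ x * y) (hle : x ^ 2 ≤ y ^ 2) :
    x ^ 2 < y ^ 2 := by
  rcases eq_or_lt_of_le hle with he | h
  · exfalso
    have h0 : (x - y) * (x + y) = 0 := by linear_combination he
    have h1 : x + y = 0 := by
      rcases mul_eq_zero.mp h0 with h | h
      · exact absurd (sub_eq_zero.mp h) hne
      · exact h
    have hy : y ≠ 0 := by intro h; apply hne; rw [h]; linarith
    have hx : x = -y := by linarith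
    rw [hx] at hxy
    nlinarith [mul_self_pos.mpr hy]
  · exact h


end Stmt5Aux

open Stmt5Aux Line

/-- Let the triangle formed by lines `i, j, k` of an arrangement have maximum
area among all triangles of the arrangement, and let `m` be a line of the
arrangement not supporting this triangle.  Then either `m` meets the interior
of the triangle, or `m` is parallel to one of its three sides. -/
theorem stmt5 (n : ℕ) (L : Fin n → Line) (hinj : Function.Injective L)
    (i j k m : Fin n) (hT : FormsTriangle (L i) (L j) (L k))
    (hmax : ∀ a b c : Fin n, FormsTriangle (L a) (L b) (L c) →
      triArea (L a) (L b) (L c) ≤ triArea (L i) (L j) (L k))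
    (hm1 : Line.pts (L m) ≠ Line.pts (L i))
    (hm2 : Line.pts (L m) ≠ Line.pts (L j))
    (hm3 : Line.pts (L m) ≠ Line.pts (L k)) :
    (Line.pts (L m) ∩ openTriangle (L i) (L j) (L k)).Nonempty ∨
      Line.Parallel (L m) (L i) ∨ Line.Parallel (L m) (L j) ∨
        Line.Parallel (L m) (L k) := by
  by_contra hcon
  push_neg at hcon
  obtain ⟨hne, hp1, hp2, hp3⟩ := hcon
  set P := inter (L i) (L j) with hPdef
  set Q := inter (L i) (L k) with hQdef
  set R := inter (L j) (L k) with hRdef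
  have hint : ∀ z, z ∈ (L m).pts → z ∉ interior (convexHull ℝ {P, Q, R}) := by
    intro z hz1 hz2
    have hz : z ∈ Line.pts (L m) ∩ openTriangle (L i) (L j) (L k) := ⟨hz1, hz2⟩
    rw [hne] at hz
    exact hz
  have hnd : cross3 P Q R ≠ 0 := cross3_ne hT
  set u := lval (L m) P with hudef
  set v := lval (L m) Q with hvdef
  set w := lval (L m) R with hwdef
  -- vertices are distinct
  have hPQ : P ≠ Q := by
    intro hc; apply hT.2.2.2; rw [← hPdef, hc]; exact inter_mem_right hT.2.1
  have hPR : P ≠ R := by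
    intro hc; apply hT.2.2.2; rw [← hPdef, hc]; exact inter_mem_right hT.2.2.1
  have hQR : Q ≠ R := by
    intro hc
    have h5 : Q = P := by
      rw [hPdef]
      exact inter_unique hT.1 (inter_mem_left hT.2.1)
        (by rw [hc]; exact inter_mem_left hT.2.2.1)
    exact hPQ h5.symm
  -- the three values are pairwise distinct
  have huv : u ≠ v := fun hc =>
    hp1 (par_of_lval_eq hPQ (inter_mem_left hT.1) (inter_mem_left hT.2.1) hc)
  have huw : u ≠ w := fun hc =>
    hp2 (par_of_lval_eq hPR (inter_mem_right hT.1) (inter_mem_left hT.2.2.1) hc)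
  have hvw : v ≠ w := fun hc =>
    hp3 (par_of_lval_eq hQR (inter_mem_right hT.2.1) (inter_mem_right hT.2.2.1) hc)
  -- pairwise products are nonnegative, else the line meets the interior
  have huv0 : 0 ≤ u * v := by
    by_contra hc
    push_neg at hc
    rcases mul_neg_iff.mp hc with ⟨h5, h6⟩ | ⟨h5, h6⟩
    · obtain ⟨z, hz1, hz2⟩ := exists_zero_interior P Q R hnd (L m) h5 h6
      exact hint z hz1 hz2
    · obtain ⟨z, hz1, hz2⟩ := exists_zero_interior Q P R
        (by rw [cross3_perm1]; exact neg_ne_zero.mpr hnd) (L m) h6 h5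
      rw [Set.insert_comm] at hz2
      exact hint z hz1 hz2
  have huw0 : 0 ≤ u * w := by
    by_contra hc
    push_neg at hc
    rcases mul_neg_iff.mp hc with ⟨h5, h6⟩ | ⟨h5, h6⟩
    · obtain ⟨z, hz1, hz2⟩ := exists_zero_interior P R Q
        (by rw [cross3_perm2]; exact neg_ne_zero.mpr hnd) (L m) h5 h6
      rw [Set.pair_comm R Q] at hz2
      exact hint z hz1 hz2
    · obtain ⟨z, hz1, hz2⟩ := exists_zero_interior R P Q
        (by rw [cross3_rot]; exact hnd) (L m) h6 h5
      rw [Set.insert_comm R P, Set.pair_comm R Q] at hz2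
      exact hint z hz1 hz2
  have hvw0 : 0 ≤ v * w := by
    by_contra hc
    push_neg at hc
    rcases mul_neg_iff.mp hc with ⟨h5, h6⟩ | ⟨h5, h6⟩
    · obtain ⟨z, hz1, hz2⟩ := exists_zero_interior Q R P
        (by rw [← cross3_rot]; exact hnd) (L m) h5 h6
      rw [Set.pair_comm R P, Set.insert_comm Q P] at hz2
      exact hint z hz1 hz2
    · obtain ⟨z, hz1, hz2⟩ := exists_zero_interior R Q P
        (by rw [cross3_perm13]; exact neg_ne_zero.mpr hnd) (L m) h6 h5
      rw [Set.pair_comm Q P, Set.insert_comm R P, Set.pair_comm R Q] at hz2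
      exact hint z hz1 hz2
  -- the three possible maximal vertices
  have caseA : v ^ 2 < u ^ 2 → w ^ 2 < u ^ 2 → False := by
    intro h1 h2
    obtain ⟨hFT, hlt⟩ := key (L i) (L j) (L k) (L m) hT hp1 hp2 huv0 huw0 h1 h2 hvw
    linarith [hmax i j m hFT]
  have caseB : u ^ 2 < v ^ 2 → w ^ 2 < v ^ 2 → False := by
    intro h1 h2
    have hkj : inter (L k) (L j) = R := inter_symm (L j) (L k)
    obtain ⟨hFT, hlt⟩ := key (L i) (L k) (L j) (L m) (FormsTriangle_swap23 hT) hp1 hp3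
      (by rw [mul_comm]; exact huv0)
      (by rw [hkj]; exact hvw0)
      h1
      (by rw [hkj]; exact h2)
      (by rw [hkj]; exact huw)
    rw [triArea_swap23] at hlt
    linarith [hmax i k m hFT]
  have caseC : u ^ 2 < w ^ 2 → v ^ 2 < w ^ 2 → False := by
    intro h1 h2
    have hji : inter (L j) (L i) = P := inter_symm (L i) (L j)
    have hki : inter (L k) (L i) = Q := inter_symm (L i) (L k)
    obtain ⟨hFT, hlt⟩ := key (L j) (L k) (L i) (L m) (FormsTriangle_rot hT) hp2 hp3
      (by rw [hji, mul_comm]; exact huw0)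
      (by rw [hki, mul_comm]; exact hvw0)
      (by rw [hji]; exact h1)
      (by rw [hki]; exact h2)
      (by rw [hji, hki]; exact huv)
    rw [triArea_rot] at hlt
    linarith [hmax j k m hFT]
  rcases le_total (u ^ 2) (v ^ 2) with h1 | h1
  · rcases le_total (v ^ 2) (w ^ 2) with h2 | h2
    · exact caseC (sq_lt_strict huw huw0 (h1.trans h2)) (sq_lt_strict hvw hvw0 h2)
    · exact caseB (sq_lt_strict huv huv0 h1)
        (sq_lt_strict (Ne.symm hvw) (by rw [mul_comm]; exact hvw0) h2)
  · rcases le_total (u ^ 2) (w ^ 2) with h2 | h2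
    · exact caseC (sq_lt_strict huw huw0 h2) (sq_lt_strict hvw hvw0 (h1.trans h2))
    · exact caseA (sq_lt_strict (Ne.symm huv) (by rw [mul_comm]; exact huv0) h1)
        (sq_lt_strict (Ne.symm huw) (by rw [mul_comm]; exact huw0) h2)
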